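/- Assume the Delzell polynomial f₁ = x₄²(x₁⁴x₂² + x₂⁴x₃² + x₁²x₃⁴ − 3x₁²x₂²x₃²) + x₃⁸ is not a sum of squares of polynomials. Then f = f₁ + x₁²x₂²x₃²x₅² cannot be written as σ₁ + σ₂ with σ₁ a sum of squares in ℝ[x₁,x₂,x₃,x₄] and σ₂ a sum of squares in ℝ[x₁,x₂,x₃,x₅]. -/

import Mathlib

open MvPolynomial

lemma isSumSq_map {R S : Type*} [Monoid R] [AddMonoid R] [Monoid S] [AddMonoid S]
    {F : Type*} [FunLike F R S] [MonoidHomClass F R S] [AddMonoidHomClass F R S]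
    (h : F) {a : R} (ha : IsSumSq a) : IsSumSq (h a) := by
  induction ha with
  | zero => simpa using IsSumSq.zero
  | @sq_add x S _ ih => simpa [map_add, map_mul] using IsSumSq.sq_add (h x) (s := h S) ih

theorem stmt_14
    (f₁ : MvPolynomial (Fin 4) ℝ)
    (hf₁ : f₁ = X 3 ^ 2 * (X 0 ^ 4 * X 1 ^ 2 + X 1 ^ 4 * X 2 ^ 2 + X 0 ^ 2 * X 2 ^ 4
        - 3 * X 0 ^ 2 * X 1 ^ 2 * X 2 ^ 2) + X 2 ^ 8)
    (hnotsos : ¬ IsSumSq f₁) :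
    ¬ ∃ (σ₁ : MvPolynomial (Fin 4) ℝ) (σ₂ : MvPolynomial (Fin 4) ℝ),
      IsSumSq σ₁ ∧ IsSumSq σ₂ ∧
      rename (![0, 1, 2, 3] : Fin 4 → Fin 5) f₁
          + (X 0 ^ 2 * X 1 ^ 2 * X 2 ^ 2 * X 4 ^ 2 : MvPolynomial (Fin 5) ℝ)
        = rename (![0, 1, 2, 3] : Fin 4 → Fin 5) σ₁
          + rename (![0, 1, 2, 4] : Fin 4 → Fin 5) σ₂ := by
  rintro ⟨σ₁, σ₂, h₁, h₂, heq⟩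
  -- substitution x₅ = 0
  set g : Fin 5 → MvPolynomial (Fin 4) ℝ := ![X 0, X 1, X 2, X 3, 0] with hg
  have key : ∀ p : MvPolynomial (Fin 4) ℝ,
      aeval g (rename (![0, 1, 2, 3] : Fin 4 → Fin 5) p) = p := by
    intro p
    rw [aeval_rename]
    have : (g ∘ ![0, 1, 2, 3] : Fin 4 → MvPolynomial (Fin 4) ℝ) = X := by
      funext i; fin_cases i <;> simp [hg]
    rw [this]
    simp [aeval_X_left]
  have happ := congrArg (aeval g) heq
  rw [map_add, map_add, key f₁, key σ₁, aeval_rename] at happ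
  have hzero : aeval g (X 0 ^ 2 * X 1 ^ 2 * X 2 ^ 2 * X 4 ^ 2 : MvPolynomial (Fin 5) ℝ) = 0 := by
    simp [hg]
  rw [hzero, add_zero] at happ
  apply hnotsos
  rw [happ]
  exact h₁.add (isSumSq_map _ h₂)
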